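/- arXiv:math/0601339 — 5 statements merged into one kernel-verified Lean document; each statement's English description precedes it below -/
import Mathlib

section
/- The largest power of 2 dividing the n-th Catalan number C_n = (1/(n+1))·binom(2n,n) equals s(n+1) - 1, where s(m) denotes the sum of the binary digits of m. -/
open Nat in
/-- The largest power of 2 dividing the Catalan number `C n` is `s(n+1) - 1`,
where `s m` is the binary digit sum of `m`. -/
theorem catalan_two_adic_val (n : ℕ) :
    padicValNat 2 (catalan n) = (Nat.digits 2 (n + 1)).sum - 1 := by
  haveI : Fact (Nat.Prime 2) := ⟨Nat.prime_two⟩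
  have hcat : catalan n ≠ 0 := by
    intro h
    have := succ_mul_catalan_eq_centralBinom n
    rw [h, Nat.mul_zero] at this
    exact (Nat.centralBinom_pos n).ne' this.symm
  have hfac : ∀ m : ℕ, padicValNat 2 (m !) = m - (Nat.digits 2 m).sum := by
    intro m
    have := sub_one_mul_padicValNat_factorial (p := 2) m
    simpa using this
  have hle : ∀ m : ℕ, (Nat.digits 2 m).sum ≤ m := fun m => Nat.digit_sum_le 2 m
  have hs2 : (Nat.digits 2 (2 * n)).sum = (Nat.digits 2 n).sum := by
    rcases Nat.eq_zero_or_pos n with h | h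
    · simp [h]
    · rw [Nat.digits_def' (by norm_num : (1:ℕ) < 2) (by positivity)]
      simp
  have h1 : padicValNat 2 ((n+1)!) = padicValNat 2 (n+1) + padicValNat 2 (n !) := by
    rw [Nat.factorial_succ, padicValNat.mul (by omega) (Nat.factorial_ne_zero n)]
  have h2 : (2*n)! = n.centralBinom * n ! * n ! := by
    have := Nat.choose_mul_factorial_mul_factorial (show n ≤ 2 * n by omega)
    rw [show 2 * n - n = n by omega] at this
    rw [← this]; rfl
  have h2v : padicValNat 2 ((2*n)!) =
      padicValNat 2 n.centralBinom + padicValNat 2 (n !) + padicValNat 2 (n !) := by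
    rw [h2, padicValNat.mul (Nat.mul_ne_zero (Nat.centralBinom_ne_zero n) (Nat.factorial_ne_zero n)) (Nat.factorial_ne_zero n),
      padicValNat.mul (Nat.centralBinom_ne_zero n) (Nat.factorial_ne_zero n)]
  have h3 : padicValNat 2 n.centralBinom = padicValNat 2 (n+1) + padicValNat 2 (catalan n) := by
    rw [← succ_mul_catalan_eq_centralBinom, padicValNat.mul (by omega) hcat]
  have e1 := hfac n
  have e2 := hfac (n+1)
  have e3 := hfac (2*n)
  have l1 := hle n
  have l2 := hle (n+1)
  have l3 := hle (2*n)
  rw [hs2] at e3 l3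
  omega
end

section
/- The Catalan number C_n is odd if and only if n = 2^k - 1 for some k ≥ 0. -/
open Finset

lemma zmod2_sq (x : ZMod 2) : x * x = x := by revert x; decide

lemma sym_sum_odd (g : ℕ → ZMod 2) (m : ℕ) (hg : ∀ i ≤ 2*m+1, g (2*m+1-i) = g i) :
    ∑ i ∈ range (2*m+2), g i = 0 := by
  have h1 : (2*m+2) = (m+1) + (m+1) := by ring
  rw [h1, Finset.sum_range_add]
  have h2 : ∑ i ∈ range (m+1), g (m+1+i) = ∑ i ∈ range (m+1), g (m-i) := by
    apply Finset.sum_congr rfl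
    intro i hi
    rw [mem_range] at hi
    have := hg (m+1+i) (by omega)
    rw [show 2*m+1-(m+1+i) = m - i by omega] at this
    exact this.symm
  rw [h2]
  have h3 : ∑ i ∈ range (m+1), g (m-i) = ∑ i ∈ range (m+1), g i := by
    have := Finset.sum_range_reflect g (m+1)
    simpa using this
  rw [h3]
  exact CharTwo.add_self_eq_zero _

lemma sym_sum_even (g : ℕ → ZMod 2) (m : ℕ) (hg : ∀ i ≤ 2*m, g (2*m-i) = g i) :
    ∑ i ∈ range (2*m+1), g i = g m := by
  have h1 : (2*m+1) = m + (m+1) := by ring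
  rw [h1, Finset.sum_range_add]
  rw [Finset.sum_range_succ']
  have h2 : ∑ i ∈ range m, g (m+(i+1)) = ∑ i ∈ range m, g (m-1-i) := by
    apply Finset.sum_congr rfl
    intro i hi
    rw [mem_range] at hi
    have := hg (m+(i+1)) (by omega)
    rw [show 2*m-(m+(i+1)) = m - 1 - i by omega] at this
    exact this.symm
  rw [h2, Finset.sum_range_reflect g m]
  rw [← add_assoc, CharTwo.add_self_eq_zero, zero_add]
  simp

lemma catalan_cast_succ (n : ℕ) :
    (catalan (n+1) : ZMod 2) = ∑ i ∈ range (n+1), (catalan i : ZMod 2) * (catalan (n-i) : ZMod 2) := by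
  rw [catalan_succ]
  rw [Fin.sum_univ_eq_sum_range (fun i => catalan i * catalan (n - i)) (n+1)]
  push_cast
  rfl

lemma gsym (n : ℕ) : ∀ i ≤ n,
    (fun i => (catalan i : ZMod 2) * (catalan (n-i) : ZMod 2)) (n - i)
      = (fun i => (catalan i : ZMod 2) * (catalan (n-i) : ZMod 2)) i := by
  intro i hi
  simp only
  rw [show n - (n - i) = i by omega, mul_comm]

lemma catalan_even_case (m : ℕ) : (catalan (2*m+2) : ZMod 2) = 0 := by
  have := catalan_cast_succ (2*m+1)
  rw [show 2*m+1+1 = 2*m+2 by omega] at this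
  rw [this]
  exact sym_sum_odd _ m (gsym (2*m+1))

lemma catalan_odd_case (m : ℕ) : (catalan (2*m+1) : ZMod 2) = (catalan m : ZMod 2) := by
  have := catalan_cast_succ (2*m)
  rw [show 2*m+1 = 2*m+1 by omega] at this
  rw [this, sym_sum_even _ m (gsym (2*m))]
  rw [show 2*m - m = m by omega]
  exact zmod2_sq _

lemma odd_iff_cast (n : ℕ) : Odd n ↔ (n : ZMod 2) = 1 := by
  rw [Nat.odd_iff]
  constructor
  · intro h
    rw [← ZMod.natCast_mod n 2, h]; rfl
  · intro h
    rcases Nat.mod_two_eq_zero_or_one n with h2 | h2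
    · exfalso
      rw [← ZMod.natCast_mod n 2, h2] at h
      simp at h
    · exact h2

/-- The Catalan number `C n` is odd iff `n = 2^k - 1` for some `k`. -/
theorem catalan_odd_iff (n : ℕ) :
    Odd (catalan n) ↔ ∃ k : ℕ, n = 2 ^ k - 1 := by
  induction n using Nat.strong_induction_on with
  | _ n ih =>
    match n with
    | 0 => simpa using ⟨0, rfl⟩
    | (p+1) =>
      rcases Nat.even_or_odd p with ⟨m, hm⟩ | ⟨m, hm⟩
      · -- n = 2m+1
        have hn : p + 1 = 2*m+1 := by omega
        rw [hn]
        have h1 : Odd (catalan (2*m+1)) ↔ Odd (catalan m) := by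
          rw [odd_iff_cast, odd_iff_cast, catalan_odd_case]
        rw [h1, ih m (by omega)]
        constructor
        · rintro ⟨k, hk⟩
          refine ⟨k+1, ?_⟩
          have : 1 ≤ 2^k := Nat.one_le_two_pow
          rw [pow_succ]
          omega
        · rintro ⟨k, hk⟩
          match k with
          | 0 => omega
          | (j+1) =>
            refine ⟨j, ?_⟩
            have : 1 ≤ 2^j := Nat.one_le_two_pow
            rw [pow_succ] at hk
            omega
      · -- n = 2m+2
        have hn : p + 1 = 2*m+2 := by omega
        rw [hn]
        constructor
        · intro h
          rw [odd_iff_cast, catalan_even_case] at h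
          exact absurd h (by decide)
        · rintro ⟨k, hk⟩
          match k with
          | 0 => omega
          | (j+1) =>
            exfalso
            have : 1 ≤ 2^j := Nat.one_le_two_pow
            rw [pow_succ] at hk
            omega
end

section
/- Let F be the set of functions f : ℕ → ℤ such that f(x) is odd for all x and 2^{n+1} divides (Δⁿf)(x) for all n ≥ 1 and all x. If f, g ∈ F then the pointwise product f·g ∈ F. -/
/-- The forward difference operator. -/
def Δ (f : ℕ → ℤ) : ℕ → ℤ := fun x => f (x + 1) - f x

lemma delta_iter_succ (f : ℕ → ℤ) (m x : ℕ) :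
    Δ^[m] f (x + 1) = Δ^[m] f x + Δ^[m + 1] f x := by
  rw [Function.iterate_succ_apply']
  simp [Δ]

open Finset in
lemma leibniz (f g : ℕ → ℤ) (n : ℕ) : ∀ x, Δ^[n] (f * g) x =
    ∑ k ∈ range (n + 1), (n.choose k : ℤ) * Δ^[k] f x * Δ^[n - k] g (x + k) := by
  induction n with
  | zero => intro x; simp [Pi.mul_apply]
  | succ n ih =>
    intro x
    have h1 : Δ^[n + 1] (f * g) x = Δ^[n] (f * g) (x + 1) - Δ^[n] (f * g) x := by
      rw [Function.iterate_succ_apply']; simp [Δ]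
    rw [h1, ih, ih, ← Finset.sum_sub_distrib]
    have h2 : ∀ k ∈ range (n + 1),
        (n.choose k : ℤ) * Δ^[k] f (x + 1) * Δ^[n - k] g (x + 1 + k)
          - (n.choose k : ℤ) * Δ^[k] f x * Δ^[n - k] g (x + k)
        = (n.choose k : ℤ) * Δ^[k + 1] f x * Δ^[n - k] g (x + (k + 1))
          + (n.choose k : ℤ) * Δ^[k] f x * Δ^[(n - k) + 1] g (x + k) := by
      intro k _
      have e : x + 1 + k = x + k + 1 := by ring
      rw [e, delta_iter_succ f k x, delta_iter_succ g (n - k) (x + k)]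
      have e2 : x + (k + 1) = x + k + 1 := by ring
      rw [e2, delta_iter_succ g (n - k) (x + k)]
      ring
    rw [Finset.sum_congr rfl h2, Finset.sum_add_distrib]
    rw [Finset.sum_range_succ' (fun k => ((n+1).choose k : ℤ) * Δ^[k] f x * Δ^[n + 1 - k] g (x + k)) (n + 1)]
    have h3 : ∀ k ∈ range (n + 1),
        (((n+1).choose (k+1) : ℕ) : ℤ) * Δ^[k + 1] f x * Δ^[n + 1 - (k + 1)] g (x + (k + 1))
        = (n.choose k : ℤ) * Δ^[k + 1] f x * Δ^[n - k] g (x + (k + 1))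
          + (n.choose (k+1) : ℤ) * Δ^[k + 1] f x * Δ^[n - k] g (x + (k + 1)) := by
      intro k _
      have : n + 1 - (k + 1) = n - k := by omega
      rw [this, Nat.choose_succ_succ]
      push_cast
      ring
    rw [Finset.sum_congr rfl h3, Finset.sum_add_distrib]
    -- now: ∑A + ∑B = (∑A + ∑C) + D where D is the k=0 term
    have h4 : ∑ k ∈ range (n + 1), (n.choose k : ℤ) * Δ^[k] f x * Δ^[(n - k) + 1] g (x + k)
        = ∑ k ∈ range (n + 1), (n.choose (k+1) : ℤ) * Δ^[k + 1] f x * Δ^[n - k] g (x + (k + 1))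
          + ((n+1).choose 0 : ℤ) * Δ^[0] f x * Δ^[n + 1 - 0] g (x + 0) := by
      rw [Finset.sum_range_succ' (fun k => (n.choose k : ℤ) * Δ^[k] f x * Δ^[(n - k) + 1] g (x + k)) n]
      have h5 : ∀ k ∈ range n,
          (n.choose (k+1) : ℤ) * Δ^[k + 1] f x * Δ^[(n - (k+1)) + 1] g (x + (k + 1))
          = (n.choose (k+1) : ℤ) * Δ^[k + 1] f x * Δ^[n - k] g (x + (k + 1)) := by
        intro k hk
        rw [Finset.mem_range] at hk
        have : n - (k + 1) + 1 = n - k := by omega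
        rw [this]
      rw [Finset.sum_congr rfl h5]
      rw [Finset.sum_range_succ (fun k => (n.choose (k+1) : ℤ) * Δ^[k + 1] f x * Δ^[n - k] g (x + (k + 1))) n]
      simp [Nat.choose_succ_self]
    rw [h4]
    ring

/-- The class `F` is closed under pointwise products. -/
theorem mul_mem_F (f g : ℕ → ℤ)
    (hfodd : ∀ x, Odd (f x))
    (hfdvd : ∀ n ≥ 1, ∀ x, (2 : ℤ) ^ (n + 1) ∣ Δ^[n] f x)
    (hgodd : ∀ x, Odd (g x))
    (hgdvd : ∀ n ≥ 1, ∀ x, (2 : ℤ) ^ (n + 1) ∣ Δ^[n] g x) :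
    (∀ x, Odd ((f * g) x)) ∧
      ∀ n ≥ 1, ∀ x, (2 : ℤ) ^ (n + 1) ∣ Δ^[n] (f * g) x := by
  constructor
  · intro x
    exact (hfodd x).mul (hgodd x)
  · intro n hn x
    rw [leibniz]
    apply Finset.dvd_sum
    intro k hk
    rw [Finset.mem_range] at hk
    rcases Nat.eq_zero_or_pos k with hk0 | hk1
    · subst hk0
      simp only [Nat.sub_zero]
      exact Dvd.dvd.mul_left (hgdvd n hn (x + 0)) _
    · rcases Nat.lt_or_ge k n with hkn | hkn
      · -- middle term: 2^(k+1) * 2^(n-k+1) = 2^(n+2)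
        have h1 := hfdvd k hk1 x
        have h2 := hgdvd (n - k) (by omega) (x + k)
        have : (2:ℤ)^(n+1) ∣ (2:ℤ)^(k+1) * (2:ℤ)^(n-k+1) := by
          rw [← pow_add]
          apply pow_dvd_pow
          omega
        refine dvd_trans this ?_
        have := mul_dvd_mul h1 h2
        calc (2:ℤ)^(k+1) * 2^(n-k+1) ∣ Δ^[k] f x * Δ^[n - k] g (x + k) := this
          _ ∣ (n.choose k : ℤ) * Δ^[k] f x * Δ^[n - k] g (x + k) := by
              rw [mul_assoc]; exact Dvd.dvd.mul_left (dvd_refl _) _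
      · -- k = n
        have hkn' : k = n := by omega
        subst hkn'
        have h1 := hfdvd k hk1 x
        exact (h1.mul_left _).mul_right _
end

section
/- Let q ≡ 1 (mod 4) be an integer and define the q-Catalan number C_n(q) = Σ_P q^{area(P)} = Σ_P Π_i q^{h_i}, summing over Dyck paths P of length 2n with up-step heights h_i. Then the 2-adic valuation of C_n(q) equals s(n+1) - 1, the 2-adic valuation of C_n. -/
/-- Heights of the up-steps of a path, starting at height `h`. -/
def upHeights : List Bool → ℕ → List ℕ
  | [], _ => []
  | true :: t, h => h :: upHeights t (h + 1)
  | false :: t, h => upHeights t (h - 1)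

/-- A list of steps (`true` = up, `false` = down) is a Dyck path. -/
def IsDyck (l : List Bool) : Prop :=
  l.count true = l.count false ∧ ∀ p ∈ l.inits, p.count false ≤ p.count true

instance : DecidablePred IsDyck := fun l => by unfold IsDyck; infer_instance

/-- The weighted Catalan number `C_n^b`. -/
def wcat (b : ℕ → ℤ) (n : ℕ) : ℤ :=
  ∑ f : Fin (2 * n) → Bool,
    if IsDyck (List.ofFn f) then ((upHeights (List.ofFn f) 0).map b).prod else 0

namespace QC

@[simp] lemma count_cons_tt (t : List Bool) : (true :: t).count true = t.count true + 1 := by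
  simp [List.count_cons]
@[simp] lemma count_cons_tf (t : List Bool) : (false :: t).count true = t.count true := by
  simp [List.count_cons]
@[simp] lemma count_cons_ft (t : List Bool) : (true :: t).count false = t.count false := by
  simp [List.count_cons]
@[simp] lemma count_cons_ff (t : List Bool) : (false :: t).count false = t.count false + 1 := by
  simp [List.count_cons]

lemma cnt_len (l : List Bool) : l.count true + l.count false = l.length := by
  induction l with
  | nil => simp
  | cons x t ih => cases x <;> simp <;> omega

lemma isDyck_iff {l : List Bool} :
    IsDyck l ↔ l.count true = l.count false ∧
      ∀ p, p <+: l → p.count false ≤ p.count true := by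
  unfold IsDyck
  simp [List.mem_inits]

/-- prefix-condition: path from height `h` stays nonneg -/
def HQ (h : ℕ) (l : List Bool) : Prop :=
  ∀ p, p <+: l → p.count false ≤ h + p.count true

lemma HQ.of_cons_true {h : ℕ} {t : List Bool} (H : HQ h (true :: t)) : HQ (h + 1) t := by
  intro p hp
  have := H (true :: p) (List.cons_prefix_cons.mpr ⟨rfl, hp⟩)
  simp at this; omega

lemma HQ.of_cons_false {h : ℕ} {t : List Bool} (H : HQ h (false :: t)) :
    1 ≤ h ∧ HQ (h - 1) t := by
  have h1 := H [false] (List.cons_prefix_cons.mpr ⟨rfl, List.nil_prefix⟩)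
  simp at h1
  refine ⟨h1, fun p hp => ?_⟩
  have := H (false :: p) (List.cons_prefix_cons.mpr ⟨rfl, hp⟩)
  simp at this; omega

lemma upH_nil (h : ℕ) : upHeights [] h = [] := rfl
lemma upH_true (t : List Bool) (h : ℕ) : upHeights (true :: t) h = h :: upHeights t (h + 1) := rfl
lemma upH_false (t : List Bool) (h : ℕ) : upHeights (false :: t) h = upHeights t (h - 1) := rfl

lemma len_upHeights (l : List Bool) : ∀ h, (upHeights l h).length = l.count true := by
  induction l with
  | nil => intro h; simp [upH_nil]
  | cons x t ih => intro h; cases x <;> simp [upH_true, upH_false, ih]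

lemma upHeights_shift (l : List Bool) : ∀ h, HQ h l →
    upHeights l (h + 1) = (upHeights l h).map (· + 1) := by
  induction l with
  | nil => intro h _; simp [upH_nil]
  | cons x t ih =>
    intro h H
    cases x with
    | true =>
      rw [upH_true, upH_true, List.map_cons, ih (h + 1) H.of_cons_true]
    | false =>
      obtain ⟨h1, H'⟩ := H.of_cons_false
      rw [upH_false, upH_false, show h + 1 - 1 = (h - 1) + 1 by omega, ih (h - 1) H']

lemma upHeights_append (l r : List Bool) : ∀ h, HQ h l →
    upHeights (l ++ r) h = upHeights l h ++ upHeights r (h + l.count true - l.count false) := by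
  induction l with
  | nil => intro h _; simp [upH_nil]
  | cons x t ih =>
    intro h H
    cases x with
    | true =>
      rw [List.cons_append, upH_true, upH_true, ih (h + 1) H.of_cons_true, List.cons_append,
        count_cons_tt, count_cons_ft, show h + 1 + t.count true - t.count false
          = h + (t.count true + 1) - t.count false by omega]
    | false =>
      obtain ⟨h1, H'⟩ := H.of_cons_false
      rw [List.cons_append, upH_false, upH_false, ih (h - 1) H', count_cons_tf, count_cons_ff,
        show h - 1 + t.count true - t.count false
          = h + t.count true - (t.count false + 1) by omega]

lemma take_append_add (l r : List Bool) (n : ℕ) :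
    (l ++ r).take (l.length + n) = l ++ r.take n := by
  induction l with
  | nil => simp
  | cons x t ih =>
    rw [List.cons_append, List.length_cons,
      show t.length + 1 + n = (t.length + n) + 1 by omega, List.take_succ_cons, ih,
      List.cons_append]

lemma take_append_le (l r : List Bool) {m : ℕ} (hm : m ≤ l.length) :
    (l ++ r).take m = l.take m := by
  induction l generalizing m with
  | nil =>
    have : m = 0 := by simpa using hm
    subst this; simp
  | cons x t ih =>
    cases m with
    | zero => simp
    | succ m =>
      rw [List.cons_append, List.take_succ_cons, List.take_succ_cons, ih (by simpa using hm)]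

lemma prefix_append_cases {p l r : List Bool} (hp : p <+: l ++ r) :
    p <+: l ∨ ∃ s, s <+: r ∧ p = l ++ s := by
  rcases le_or_gt p.length l.length with hle | hlt
  · left
    have h1 : p = (l ++ r).take p.length := List.prefix_iff_eq_take.mp hp
    rw [take_append_le l r hle] at h1
    rw [h1]
    exact List.take_prefix _ _
  · right
    obtain ⟨t, ht⟩ := hp
    have hl : l = p.take l.length := by
      have := congrArg (List.take l.length) ht
      rw [take_append_le p t (by omega)] at this
      rw [this, show l.length = l.length + 0 by omega, take_append_add l r 0]
      simp
    have hlp : l <+: p := by rw [hl]; exact ⟨p.drop l.length, List.take_append_drop _ _⟩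
    obtain ⟨s, rfl⟩ := hlp
    refine ⟨s, ⟨t, ?_⟩, rfl⟩
    rw [List.append_assoc] at ht
    exact (List.append_cancel_left ht)

def Wq (q : ℤ) (l : List Bool) : ℤ := ((upHeights l 0).map fun x => q ^ x).prod

lemma HQ_of_dyck {l : List Bool} (hl : IsDyck l) (h : ℕ) : HQ h l := by
  intro p hp
  have := (isDyck_iff.mp hl).2 p hp
  omega

lemma Wq_decomp (q : ℤ) {l₁ : List Bool} (l₂ : List Bool) (h₁ : IsDyck l₁) :
    Wq q (true :: (l₁ ++ false :: l₂)) = q ^ l₁.count true * Wq q l₁ * Wq q l₂ := by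
  have hc := (isDyck_iff.mp h₁).1
  unfold Wq
  rw [upH_true, upHeights_append l₁ (false :: l₂) 1 (HQ_of_dyck h₁ 1),
    show 1 + l₁.count true - l₁.count false = 1 by omega, upH_false,
    show (1 : ℕ) - 1 = 0 by rfl,
    show (1 : ℕ) = 0 + 1 by rfl, upHeights_shift l₁ 0 (HQ_of_dyck h₁ 0)]
  rw [List.map_cons, List.map_append, List.map_map, List.prod_cons, List.prod_append]
  have : ((upHeights l₁ 0).map ((fun x => q ^ x) ∘ (· + 1))).prod
      = q ^ l₁.count true * ((upHeights l₁ 0).map fun x => q ^ x).prod := by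
    have h2 : ((fun x => q ^ x) ∘ (· + 1)) = fun x => q ^ x * q := by
      funext x; simp [pow_succ]
    rw [h2, List.prod_map_mul]
    simp [List.map_const', List.prod_replicate, len_upHeights, mul_comm]
  rw [this]
  ring

lemma isDyck_build {l₁ l₂ : List Bool} (h₁ : IsDyck l₁) (h₂ : IsDyck l₂) :
    IsDyck (true :: (l₁ ++ false :: l₂)) := by
  obtain ⟨hc₁, hp₁⟩ := isDyck_iff.mp h₁
  obtain ⟨hc₂, hp₂⟩ := isDyck_iff.mp h₂
  rw [isDyck_iff]
  constructor
  · simp; omega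
  · intro p hp
    cases p with
    | nil => simp
    | cons x p' =>
      obtain ⟨rfl, hp'⟩ := List.cons_prefix_cons.mp hp
      rcases prefix_append_cases hp' with h | ⟨s, hs, rfl⟩
      · have := hp₁ p' h
        simp; omega
      · cases s with
        | nil =>
          simp; omega
        | cons y s' =>
          obtain ⟨rfl, hs'⟩ := List.cons_prefix_cons.mp hs
          have := hp₂ s' hs'
          simp; omega

lemma inj_aux {a₁ a₂ b₁ b₂ : List Bool} (ha : IsDyck a₁) (hb : IsDyck b₁)
    (heq : a₁ ++ false :: a₂ = b₁ ++ false :: b₂) (hlt : a₁.length < b₁.length) : False := by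
  have h1 : (a₁ ++ false :: a₂).take (a₁.length + 1) = a₁ ++ [false] := by
    rw [take_append_add]; rfl
  have h2 : (b₁ ++ false :: b₂).take (a₁.length + 1) = b₁.take (a₁.length + 1) :=
    take_append_le _ _ (by omega)
  have h3 : a₁ ++ [false] <+: b₁ := by
    calc a₁ ++ [false] = (a₁ ++ false :: a₂).take (a₁.length + 1) := h1.symm
    _ = b₁.take (a₁.length + 1) := by rw [heq]; exact h2
    _ <+: b₁ := List.take_prefix _ _
  have h4 := (isDyck_iff.mp hb).2 _ h3
  have h5 := (isDyck_iff.mp ha).1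
  simp at h4
  omega

lemma isDyck_decomp {l : List Bool} (hl : IsDyck l) (hne : l ≠ []) :
    ∃ l₁ l₂, l = true :: (l₁ ++ false :: l₂) ∧ IsDyck l₁ ∧ IsDyck l₂ := by
  classical
  obtain ⟨hc, hpre⟩ := isDyck_iff.mp hl
  obtain ⟨x, t, rfl⟩ : ∃ x t, l = x :: t := by
    cases l with
    | nil => exact absurd rfl hne
    | cons x t => exact ⟨x, t, rfl⟩
  have hx : x = true := by
    cases x with
    | true => rfl
    | false =>
      have := hpre [false] (List.cons_prefix_cons.mpr ⟨rfl, List.nil_prefix⟩)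
      simp at this
  subst hx
  -- counts of t
  have hct : t.count false = t.count true + 1 := by
    simp at hc; omega
  have hb : ∀ p, p <+: t → p.count false ≤ p.count true + 1 := by
    intro p hp
    have := hpre (true :: p) (List.cons_prefix_cons.mpr ⟨rfl, hp⟩)
    simp at this; omega
  have hP : ∃ j, j ≤ t.length ∧ (t.take j).count false = (t.take j).count true + 1 :=
    ⟨t.length, le_rfl, by rw [List.take_length]; exact hct⟩
  set j := Nat.find hP with hjdef
  obtain ⟨hjle, hjeq⟩ := Nat.find_spec hP
  have hmin : ∀ m, m < j → ¬(m ≤ t.length ∧ (t.take m).count false = (t.take m).count true + 1) :=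
    fun m hm => Nat.find_min hP hm
  have hj1 : 1 ≤ j := by
    rcases Nat.eq_zero_or_pos j with h0 | h; swap
    · exact h
    · rw [← hjdef, h0] at hjeq; simp at hjeq
  set k := j - 1 with hkdef
  have hk : k < t.length := by omega
  have hkj : k + 1 = j := by omega
  have htake : t.take (k + 1) = t.take k ++ [t[k]] := by
    rw [List.take_succ, List.getElem?_eq_getElem hk]
    rfl
  have hck : (t.take k).count false ≤ (t.take k).count true := by
    have h1 := hmin k (by omega)
    have h2 := hb (t.take k) (List.take_prefix k t)
    have h3 : k ≤ t.length := by omega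
    by_contra h4
    exact h1 ⟨h3, by omega⟩
  have hjeq' : (t.take k ++ [t[k]]).count false = (t.take k ++ [t[k]]).count true + 1 := by
    rw [← htake, hkj]; exact hjeq
  have hxk : t[k] = false := by
    cases h : t[k] with
    | false => rfl
    | true => rw [h] at hjeq'; simp at hjeq'; omega
  rw [hxk] at hjeq'
  simp at hjeq'
  -- hjeq' : count false (take k t) = count true (take k t) (after +1 cancel)... check
  have hceq : (t.take k).count false = (t.take k).count true := by omega
  have hdec : t = t.take k ++ false :: t.drop (k + 1) := by
    conv_lhs => rw [← List.take_append_drop k t]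
    rw [List.drop_eq_getElem_cons hk, hxk]
  refine ⟨t.take k, t.drop (k + 1), by rw [← hdec], ?_, ?_⟩
  · rw [isDyck_iff]
    refine ⟨hceq.symm, fun p hp => ?_⟩
    have hpt : p <+: t := hp.trans (List.take_prefix k t)
    have hplen : p.length ≤ k := by
      have := hp.length_le
      rw [List.length_take] at this
      omega
    have hpe : p = t.take p.length := List.prefix_iff_eq_take.mp hpt
    have h1 := hmin p.length (by omega)
    have h2 := hb p hpt
    by_contra h4
    refine h1 ⟨by omega, ?_⟩
    rw [← hpe]
    omega
  · rw [isDyck_iff]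
    constructor
    · have := hct
      conv_lhs at this => rw [hdec]
      conv_rhs at this => rw [hdec]
      simp at this
      omega
    · intro p hp
      obtain ⟨r, hr⟩ := hp
      have hpfx : true :: (t.take k ++ false :: p) <+: true :: t := by
        refine List.cons_prefix_cons.mpr ⟨rfl, ?_⟩
        conv_rhs => rw [hdec, ← hr]
        exact ⟨r, by simp⟩
      have := hpre _ hpfx
      simp at this
      omega
def dset (m : ℕ) : Finset (List Bool) :=
  ((Finset.univ : Finset (Fin m → Bool)).image List.ofFn).filter IsDyck

lemma mem_dset {m : ℕ} {l : List Bool} : l ∈ dset m ↔ l.length = m ∧ IsDyck l := by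
  unfold dset
  rw [Finset.mem_filter, Finset.mem_image]
  constructor
  · rintro ⟨⟨f, _, rfl⟩, hd⟩
    exact ⟨by simp, hd⟩
  · rintro ⟨hlen, hd⟩
    subst hlen
    exact ⟨⟨fun i => l[(i : ℕ)], Finset.mem_univ _, List.ofFn_getElem⟩, hd⟩

lemma wcat_eq_sum (b : ℕ → ℤ) (n : ℕ) :
    wcat b n = ∑ l ∈ dset (2 * n), ((upHeights l 0).map b).prod := by
  unfold wcat dset
  rw [Finset.sum_filter,
    Finset.sum_image (fun x _ y _ h => List.ofFn_inj.mp h)]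

lemma wcat_zero (b : ℕ → ℤ) : wcat b 0 = 1 := by
  rw [wcat_eq_sum]
  have : dset (2 * 0) = {([] : List Bool)} := by
    ext l
    rw [mem_dset]
    simp [List.length_eq_zero_iff]
    rintro rfl
    constructor
    · simp
    · intro p hp
      rw [List.prefix_nil.mp ((List.mem_inits _ _).mp hp)]
      simp
  rw [this]
  simp [upH_nil]

lemma wcat_succ (q : ℤ) (n : ℕ) :
    wcat (fun x => q ^ x) (n + 1) =
      ∑ i ∈ Finset.range (n + 1),
        q ^ i * wcat (fun x => q ^ x) i * wcat (fun x => q ^ x) (n - i) := by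
  have hW : ∀ m, wcat (fun x => q ^ x) m = ∑ l ∈ dset (2 * m), Wq q l := fun m =>
    wcat_eq_sum _ m
  simp only [hW]
  have step1 : ∀ i ∈ Finset.range (n + 1),
      q ^ i * (∑ l ∈ dset (2 * i), Wq q l) * (∑ l ∈ dset (2 * (n - i)), Wq q l)
      = ∑ p ∈ dset (2 * i) ×ˢ dset (2 * (n - i)), q ^ i * Wq q p.1 * Wq q p.2 := by
    intro i _
    rw [Finset.sum_product]
    simp only [Finset.sum_mul, Finset.mul_sum]
    rw [Finset.sum_comm]
  rw [Finset.sum_congr rfl step1, Finset.sum_sigma']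
  symm
  refine Finset.sum_nbij (fun x => true :: (x.2.1 ++ false :: x.2.2)) ?_ ?_ ?_ ?_
  · rintro ⟨i, l₁, l₂⟩ hx
    simp only [Finset.mem_sigma, Finset.mem_product, Finset.mem_range] at hx
    obtain ⟨hi, h1, h2⟩ := hx
    rw [mem_dset] at h1 h2
    rw [mem_dset]
    obtain ⟨hl1, hd1⟩ := h1
    obtain ⟨hl2, hd2⟩ := h2
    refine ⟨?_, isDyck_build hd1 hd2⟩
    simp only [List.length_cons, List.length_append, hl1, hl2]
    omega
  · rintro ⟨i, a₁, a₂⟩ hx ⟨i', b₁, b₂⟩ hy heq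
    simp only [Finset.coe_sigma, Set.mem_sigma_iff, Finset.mem_coe, Finset.mem_product,
      Finset.mem_coe, Finset.mem_range] at hx hy
    obtain ⟨hi, ha1, ha2⟩ := hx
    obtain ⟨hi', hb1, hb2⟩ := hy
    rw [mem_dset] at ha1 ha2 hb1 hb2
    simp only [List.cons.injEq, true_and] at heq
    have hlen : a₁.length = b₁.length := by
      rcases lt_trichotomy a₁.length b₁.length with h | h | h
      · exact (inj_aux ha1.2 hb1.2 heq h).elim
      · exact h
      · exact (inj_aux hb1.2 ha1.2 heq.symm h).elim
    obtain ⟨h1, h2⟩ := List.append_inj heq hlen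
    simp only [List.cons.injEq, true_and] at h2
    have : i = i' := by
      have := ha1.1
      have := hb1.1
      omega
    subst this; subst h1; subst h2
    rfl
  · intro l hl
    rw [Finset.mem_coe, mem_dset] at hl
    obtain ⟨hlen, hd⟩ := hl
    obtain ⟨l₁, l₂, rfl, hd1, hd2⟩ := isDyck_decomp hd (by intro h; rw [h] at hlen; simp at hlen)
    have hc1 := (isDyck_iff.mp hd1).1
    have hc2 := (isDyck_iff.mp hd2).1
    have hcl1 := cnt_len l₁
    have hcl2 := cnt_len l₂
    simp only [List.length_cons, List.length_append] at hlen
    refine ⟨⟨l₁.count true, l₁, l₂⟩, ?_, rfl⟩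
    rw [Finset.mem_coe, Finset.mem_sigma, Finset.mem_product]
    dsimp only
    refine ⟨Finset.mem_range.mpr (by omega), ?_, ?_⟩
    · rw [mem_dset]; exact ⟨by omega, hd1⟩
    · rw [mem_dset]; exact ⟨by omega, hd2⟩
  · rintro ⟨i, l₁, l₂⟩ hx
    simp only [Finset.mem_sigma, Finset.mem_product, Finset.mem_range] at hx
    obtain ⟨hi, h1, h2⟩ := hx
    rw [mem_dset] at h1
    have hc1 := (isDyck_iff.mp h1.2).1
    have hcl1 := cnt_len l₁
    have hct : l₁.count true = i := by
      have := h1.1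
      omega
    rw [Wq_decomp q l₂ h1.2, hct]

/-- binary digit sum -/
def sdig (m : ℕ) : ℕ := (Nat.digits 2 m).sum

lemma sdig_two_mul (n : ℕ) : sdig (2 * n) = sdig n := by
  rcases Nat.eq_zero_or_pos n with rfl | hn
  · simp [sdig]
  · unfold sdig
    rw [Nat.digits_def' (by norm_num) (by omega)]
    simp [Nat.mul_div_cancel_left _ (by norm_num : 0 < 2), Nat.mul_mod_right]

lemma sdig_two_mul_add_one (n : ℕ) : sdig (2 * n + 1) = sdig n + 1 := by
  unfold sdig
  rw [Nat.digits_def' (by norm_num) (by omega)]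
  have h1 : (2 * n + 1) % 2 = 1 := by omega
  have h2 : (2 * n + 1) / 2 = n := by omega
  rw [h1, h2]; simp [Nat.add_comm]

lemma sdig_pos (n : ℕ) (hn : 0 < n) : 0 < sdig n := by
  induction n using Nat.strong_induction_on with
  | _ n ih =>
    rcases Nat.even_or_odd n with ⟨m, hm⟩ | ⟨m, hm⟩
    · subst hm
      rw [(by ring : m + m = 2 * m), sdig_two_mul]
      exact ih m (by omega) (by omega)
    · subst hm
      rw [sdig_two_mul_add_one]; omega

lemma sdig_succ (n : ℕ) : sdig n + 1 = sdig (n + 1) + padicValNat 2 (n + 1) := by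
  induction n using Nat.strong_induction_on with
  | _ n ih =>
    rcases Nat.even_or_odd n with ⟨m, hm⟩ | ⟨m, hm⟩
    · subst hm
      have h1 : padicValNat 2 (m + m + 1) = 0 := by
        apply padicValNat.eq_zero_of_not_dvd; omega
      rw [h1, (by ring : m + m = 2 * m), sdig_two_mul, sdig_two_mul_add_one]
    · subst hm
      have h2 : 2 * m + 1 + 1 = 2 * (m + 1) := by ring
      rw [h2, sdig_two_mul, sdig_two_mul_add_one]
      have h3 : padicValNat 2 (2 * (m + 1)) = padicValNat 2 (m + 1) + 1 := by
        rw [padicValNat.mul (by norm_num) (by omega), padicValNat.self (by norm_num)]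
        omega
      rw [h3]
      have := ih m (by omega)
      omega

lemma sdig_add_le (a b : ℕ) : sdig (a + b) ≤ sdig a + sdig b := by
  induction a using Nat.strong_induction_on generalizing b with
  | _ a ih =>
    rcases Nat.eq_zero_or_pos a with rfl | ha
    · simp [sdig]
    rcases Nat.even_or_odd a with ⟨m, hm⟩ | ⟨m, hm⟩ <;>
      rcases Nat.even_or_odd b with ⟨k, hk⟩ | ⟨k, hk⟩ <;> subst hm hk
    · have h : m + m + (k + k) = 2 * (m + k) := by ring
      rw [h, sdig_two_mul, (by ring : m + m = 2*m), (by ring : k + k = 2*k),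
        sdig_two_mul, sdig_two_mul]
      exact ih m (by omega) k
    · have h : m + m + (2 * k + 1) = 2 * (m + k) + 1 := by ring
      rw [h, sdig_two_mul_add_one, (by ring : m + m = 2*m), sdig_two_mul,
        sdig_two_mul_add_one]
      have := ih m (by omega) k; omega
    · have h : 2 * m + 1 + (k + k) = 2 * (m + k) + 1 := by ring
      rw [h, sdig_two_mul_add_one, sdig_two_mul_add_one, (by ring : k + k = 2*k),
        sdig_two_mul]
      have := ih m (by omega) k; omega
    · have h : 2 * m + 1 + (2 * k + 1) = 2 * (m + k + 1) := by ring
      rw [h, sdig_two_mul, sdig_two_mul_add_one, sdig_two_mul_add_one]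
      have h1 : sdig (m + k + 1) + padicValNat 2 (m + k + 1) = sdig (m+k) + 1 :=
        (sdig_succ (m+k)).symm
      have h2 := ih m (by omega) k
      omega

lemma nu2_centralBinom (n : ℕ) : padicValNat 2 (Nat.centralBinom n) = sdig n := by
  have h := sub_one_mul_padicValNat_choose_eq_sub_sum_digits' (p := 2) (k := n) (n := n)
  have h2 : Nat.centralBinom n = (n + n).choose n := by
    rw [Nat.centralBinom]; congr 1; omega
  have h3 : sdig (n + n) = sdig n := by
    rw [(by ring : n + n = 2 * n), sdig_two_mul]
  rw [h2]
  simp only [show (2:ℕ) - 1 = 1 by norm_num, one_mul] at h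
  rw [h]
  change sdig n + sdig n - sdig (n + n) = sdig n
  omega

lemma nu2_catalan (n : ℕ) : padicValNat 2 (catalan n) = sdig (n + 1) - 1 := by
  rw [catalan_eq_centralBinom_div, padicValNat.div_of_dvd (Nat.succ_dvd_centralBinom n),
    nu2_centralBinom]
  have h1 := sdig_succ n
  have h2 := sdig_pos (n + 1) (by omega)
  omega

lemma catalan_cast_succ (n : ℕ) : ((catalan (n + 1) : ℤ)) =
    ∑ i ∈ Finset.range (n + 1), (catalan i : ℤ) * (catalan (n - i) : ℤ) := by
  rw [catalan_succ]
  push_cast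
  exact Fin.sum_univ_eq_sum_range (fun i => ((catalan i : ℤ)) * ((catalan (n - i) : ℤ))) (n + 1)

lemma key_dvd (q : ℤ) (h4 : (4 : ℤ) ∣ q - 1) :
    ∀ n : ℕ, (2 : ℤ) ^ sdig (n + 1) ∣ (wcat (fun x => q ^ x) n - catalan n) := by
  intro n
  induction n using Nat.strong_induction_on with
  | _ n ih =>
    match n with
    | 0 =>
      rw [wcat_zero]
      simp [catalan_zero]
    | Nat.succ m =>
      set w : ℕ → ℤ := wcat (fun x => q ^ x) with hw
      set c : ℕ → ℤ := fun i => ((catalan i : ℤ)) with hcdef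
      have hcv : ∀ i, (2 : ℤ) ^ (sdig (i + 1) - 1) ∣ c i := by
        intro i
        have h1 : (2 : ℕ) ^ (sdig (i + 1) - 1) ∣ catalan i := by
          rw [← nu2_catalan i]
          exact pow_padicValNat_dvd
        have := Int.natCast_dvd_natCast.mpr h1
        push_cast at this
        exact this
      have hev : ∀ i, i ≤ m → (2 : ℤ) ^ sdig (i + 1) ∣ (w i - c i) := fun i hi =>
        ih i (by omega)
      have hwv : ∀ i, i ≤ m → (2 : ℤ) ^ (sdig (i + 1) - 1) ∣ w i := by
        intro i hi
        have h2 := dvd_add (hcv i)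
          (dvd_trans (pow_dvd_pow 2 (by omega : sdig (i + 1) - 1 ≤ sdig (i + 1))) (hev i hi))
        simpa using h2
      have hgoal : w (m + 1) - c (m + 1)
          = ∑ i ∈ Finset.range (m + 1), (q ^ i * w i * w (m - i) - c i * c (m - i)) := by
        rw [hw, wcat_succ, hcdef]
        dsimp only
        rw [catalan_cast_succ, Finset.sum_sub_distrib]
      rw [hgoal]
      have split : ∀ i ∈ Finset.range (m + 1),
          q ^ i * w i * w (m - i) - c i * c (m - i)
          = (q ^ i - 1) * (w i * w (m - i))
            + (w i - c i) * (w (m - i) - c (m - i))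
            + ((w i - c i) * c (m - i) + c i * (w (m - i) - c (m - i))) := by
        intro i _
        ring
      rw [Finset.sum_congr rfl split, Finset.sum_add_distrib, Finset.sum_add_distrib]
      have hsle : ∀ i, i ≤ m → sdig (m + 2) ≤ sdig (i + 1) + sdig (m - i + 1) := by
        intro i hi
        have h1 := sdig_add_le (i + 1) (m - i + 1)
        have h2 : i + 1 + (m - i + 1) = m + 2 := by omega
        rw [h2] at h1
        omega
      have hpos : ∀ i, 0 < sdig (i + 1) := fun i => sdig_pos _ (by omega)
      refine dvd_add (dvd_add ?_ ?_) ?_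
      · refine Finset.dvd_sum fun i hi => ?_
        rw [Finset.mem_range] at hi
        have hq : (4 : ℤ) ∣ q ^ i - 1 := by
          refine dvd_trans h4 ?_
          have := sub_dvd_pow_sub_pow q 1 i
          simpa using this
        have hle : sdig (m + 2) ≤ 2 + ((sdig (i + 1) - 1) + (sdig (m - i + 1) - 1)) := by
          have := hsle i (by omega)
          have := hpos i
          have := hpos (m - i)
          omega
        refine dvd_trans (pow_dvd_pow 2 hle) ?_
        rw [pow_add, pow_add]
        norm_num
        exact mul_dvd_mul (by exact_mod_cast hq) (mul_dvd_mul (hwv i (by omega)) (hwv (m - i) (by omega)))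
      · refine Finset.dvd_sum fun i hi => ?_
        rw [Finset.mem_range] at hi
        refine dvd_trans (pow_dvd_pow 2 (hsle i (by omega))) ?_
        rw [pow_add]
        exact mul_dvd_mul (hev i (by omega)) (hev (m - i) (by omega))
      · rw [Finset.sum_add_distrib]
        have hrefl : ∑ i ∈ Finset.range (m + 1), c i * (w (m - i) - c (m - i))
            = ∑ i ∈ Finset.range (m + 1), (w i - c i) * c (m - i) := by
          rw [← Finset.sum_range_reflect]
          refine Finset.sum_congr rfl fun i hi => ?_
          rw [Finset.mem_range] at hi
          rw [show m + 1 - 1 - i = m - i by omega, show m - (m - i) = i by omega, mul_comm]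
        rw [hrefl, ← two_mul]
        have hle : sdig (m + 2) ≤ 1 + (sdig (m + 2) - 1) := by
          have := sdig_pos (m + 2) (by omega)
          omega
        refine dvd_trans (pow_dvd_pow 2 hle) ?_
        rw [pow_add, pow_one]
        refine mul_dvd_mul_left 2 (Finset.dvd_sum fun i hi => ?_)
        rw [Finset.mem_range] at hi
        have hle2 : sdig (m + 2) - 1 ≤ sdig (i + 1) + (sdig (m - i + 1) - 1) := by
          have := hsle i (by omega)
          have := hpos (m - i)
          omega
        refine dvd_trans (pow_dvd_pow 2 hle2) ?_
        rw [pow_add]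
        exact mul_dvd_mul (hev i (by omega)) (hcv (m - i))

end QC

open QC

/-- If `q ≡ 1 (mod 4)`, the `q`-Catalan number `C_n(q) = C_n^{(1,q,q²,…)}`
satisfies `ξ(C_n(q)) = s(n+1) - 1 = ξ(C n)`. -/
theorem q_catalan_two_adic_val (q : ℤ) (hq : q ≡ 1 [ZMOD 4]) (n : ℕ) :
    padicValInt 2 (wcat (fun x => q ^ x) n) = (Nat.digits 2 (n + 1)).sum - 1 ∧
      padicValInt 2 (wcat (fun x => q ^ x) n) = padicValNat 2 (catalan n) := by
  have h4 : (4 : ℤ) ∣ q - 1 := by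
    have := Int.ModEq.dvd hq
    omega
  set k := sdig (n + 1) with hk
  have hk1 : 1 ≤ k := sdig_pos _ (by omega)
  have he := key_dvd q h4 n
  have hcat0 : catalan n ≠ 0 := by
    have h1 := Nat.centralBinom_pos n
    have h2 := Nat.succ_dvd_centralBinom n
    have h3 : 0 < catalan n := by
      rw [catalan_eq_centralBinom_div]
      exact Nat.div_pos (Nat.le_of_dvd h1 h2) (by omega)
    omega
  have hνc : padicValNat 2 (catalan n) = k - 1 := nu2_catalan n
  have hdc : (2 : ℤ) ^ (k - 1) ∣ ((catalan n : ℤ)) := by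
    have h1 : (2 : ℕ) ^ (k - 1) ∣ catalan n := by
      rw [← hνc]; exact pow_padicValNat_dvd
    exact_mod_cast Int.natCast_dvd_natCast.mpr h1
  have hnc : ¬ (2 : ℤ) ^ k ∣ ((catalan n : ℤ)) := by
    intro hcon
    have h1 : (2 : ℕ) ^ k ∣ catalan n := by exact_mod_cast hcon
    have h2 := pow_succ_padicValNat_not_dvd (p := 2) hcat0
    rw [hνc, show k - 1 + 1 = k by omega] at h2
    exact h2 h1
  set w := wcat (fun x => q ^ x) n with hwdef
  have hw1 : (2 : ℤ) ^ (k - 1) ∣ w := by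
    have h2 := dvd_add hdc (dvd_trans (pow_dvd_pow 2 (by omega : k - 1 ≤ k)) he)
    simpa using h2
  have hw2 : ¬ (2 : ℤ) ^ k ∣ w := by
    intro hcon
    refine hnc ?_
    have h2 := dvd_sub hcon he
    simpa using h2
  have hw0 : w ≠ 0 := by
    intro h0
    rw [h0] at hw2
    exact hw2 (dvd_zero _)
  have hval : padicValInt 2 w = k - 1 := by
    have hup : ¬ k ≤ padicValInt 2 w := by
      intro hle
      refine hw2 ?_
      have := (padicValInt_dvd_iff (p := 2) k w).mpr (Or.inr hle)
      exact_mod_cast this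
    have hlo : k - 1 ≤ padicValInt 2 w := by
      have h2 := (padicValInt_dvd_iff (p := 2) (k - 1) w).mp (by exact_mod_cast hw1)
      rcases h2 with h | h
      · exact absurd h hw0
      · exact h
    omega
  exact ⟨by rw [hval]; rw [hk]; rfl, by rw [hval, hνc]⟩
end

section
/- If a function b : ℕ → ℤ has all values odd and satisfies 2^{n+1} | (Δⁿb)(x) for all n ≥ 1 and x ∈ ℕ, then the weighted Catalan number C_n^b is odd if and only if n = 2^k - 1 for some k ≥ 0. -/
open List DyckStep Finset

/-- Bool → DyckStep. -/
def stepOf (b : Bool) : DyckStep := if b then U else D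

def toSteps (l : List Bool) : List DyckStep := l.map stepOf

lemma stepOf_inj : Function.Injective stepOf := by decide

lemma count_U_toSteps (l : List Bool) : (toSteps l).count U = l.count true :=
  List.count_map_of_injective l stepOf stepOf_inj true

lemma count_D_toSteps (l : List Bool) : (toSteps l).count D = l.count false :=
  List.count_map_of_injective l stepOf stepOf_inj false

lemma count_tf (l : List Bool) : l.count true + l.count false = l.length := by
  induction l with
  | nil => simp
  | cons h t ih => cases h <;> simp [List.count_cons] <;> omega

lemma zmod2_ne_zero_iff (x : ZMod 2) : x ≠ 0 ↔ x = 1 := by revert x; decide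

lemma odd_int_iff_cast (z : ℤ) : Odd z ↔ (z : ZMod 2) = 1 := by
  rw [Int.not_even_iff_odd.symm, even_iff_two_dvd, ← zmod2_ne_zero_iff, ne_eq,
    ZMod.intCast_zmod_eq_zero_iff_dvd]
  norm_num

lemma odd_nat_iff_cast (m : ℕ) : Odd m ↔ (m : ZMod 2) = 1 := by
  rw [Nat.not_even_iff_odd.symm, even_iff_two_dvd, ← zmod2_ne_zero_iff, ne_eq,
    ZMod.natCast_eq_zero_iff]

lemma cat_succ_zmod (n : ℕ) :
    ((catalan (n + 1) : ZMod 2)) =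
      if 2 ∣ n then ((catalan (n / 2) : ZMod 2)) else 0 := by
  have hc : ((catalan (n + 1) : ZMod 2)) =
      ∑ i ∈ Finset.range (n + 1), ((catalan i : ZMod 2) * (catalan (n - i) : ZMod 2)) := by
    rw [catalan_succ]
    push_cast
    rw [← Fin.sum_univ_eq_sum_range]
  set f : ℕ → ZMod 2 := fun i => (catalan i : ZMod 2) * (catalan (n - i) : ZMod 2) with hf
  have hsym : ∀ a ∈ Finset.range (n + 1), f a + f (n - a) = 0 := by
    intro a ha
    rw [Finset.mem_range] at ha
    have h1 : n - (n - a) = a := by omega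
    rw [hf]
    simp only
    rw [h1, mul_comm]
    exact CharTwo.add_self_eq_zero _
  by_cases h : 2 ∣ n
  · obtain ⟨m, rfl⟩ := h
    have hm : 2 * m / 2 = m := by omega
    rw [hc, ← Finset.add_sum_erase _ f (Finset.mem_range.2 (by omega : m < 2 * m + 1))]
    have h0 : ∑ i ∈ (Finset.range (2 * m + 1)).erase m, f i = 0 := by
      refine Finset.sum_involution (fun a _ => 2 * m - a) ?_ ?_ ?_ ?_
      · intro a ha
        exact hsym a (Finset.mem_of_mem_erase ha)
      · intro a ha _
        have := Finset.mem_range.1 (Finset.mem_of_mem_erase ha)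
        have := Finset.ne_of_mem_erase ha
        omega
      · intro a ha
        have h1 := Finset.mem_range.1 (Finset.mem_of_mem_erase ha)
        have h2 := Finset.ne_of_mem_erase ha
        refine Finset.mem_erase.2 ⟨by omega, Finset.mem_range.2 (by omega)⟩
      · intro a ha
        have := Finset.mem_range.1 (Finset.mem_of_mem_erase ha)
        omega
    rw [h0, add_zero, if_pos ⟨m, rfl⟩, hm, hf]
    simp only
    have h2 : 2 * m - m = m := by omega
    rw [h2]
    have : ∀ x : ZMod 2, x * x = x := by decide
    exact this _
  · rw [hc, if_neg h]
    refine Finset.sum_involution (fun a _ => n - a) ?_ ?_ ?_ ?_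
    · intro a ha; exact hsym a ha
    · intro a ha _
      have := Finset.mem_range.1 ha
      omega
    · intro a ha
      have := Finset.mem_range.1 ha
      exact Finset.mem_range.2 (by omega)
    · intro a ha
      have := Finset.mem_range.1 ha
      omega

lemma odd_catalan_iff : ∀ n : ℕ, Odd (catalan n) ↔ ∃ k : ℕ, n = 2 ^ k - 1 := by
  intro n
  induction n using Nat.strong_induction_on with
  | _ n ih =>
    match n with
    | 0 => simp [catalan_zero]; exact ⟨0, rfl⟩
    | (n + 1) =>
      rw [odd_nat_iff_cast, cat_succ_zmod]
      by_cases h : 2 ∣ n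
      · obtain ⟨m, rfl⟩ := h
        rw [if_pos ⟨m, rfl⟩]
        have hm : 2 * m / 2 = m := by omega
        rw [hm, ← odd_nat_iff_cast, ih m (by omega)]
        constructor
        · rintro ⟨j, hj⟩
          refine ⟨j + 1, ?_⟩
          have : 1 ≤ 2 ^ j := Nat.one_le_two_pow
          have : 2 ^ (j + 1) = 2 * 2 ^ j := by ring
          omega
        · rintro ⟨k, hk⟩
          match k with
          | 0 => omega
          | (k + 1) =>
            refine ⟨k, ?_⟩
            have : 1 ≤ 2 ^ k := Nat.one_le_two_pow
            have : 2 ^ (k + 1) = 2 * 2 ^ k := by ring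
            omega
      · rw [if_neg h]
        constructor
        · intro h0; exact absurd h0.symm (by decide)
        · rintro ⟨k, hk⟩
          match k with
          | 0 => omega
          | (k + 1) =>
            exfalso
            have : 1 ≤ 2 ^ k := Nat.one_le_two_pow
            have : 2 ^ (k + 1) = 2 * 2 ^ k := by ring
            omega

def boolOf : DyckStep → Bool
  | U => true
  | D => false

lemma stepOf_boolOf (s : DyckStep) : stepOf (boolOf s) = s := by cases s <;> rfl

/-- Make a DyckWord from a Dyck list of Bools. -/
def dwOf (l : List Bool) (h : IsDyck l) : DyckWord where
  toList := toSteps l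
  count_U_eq_count_D := by rw [count_U_toSteps, count_D_toSteps, h.1]
  count_D_le_count_U i := by
    rw [toSteps, ← List.map_take, ← toSteps, count_U_toSteps, count_D_toSteps]
    exact h.2 _ ((List.mem_inits _ _).2 (List.take_prefix i l))

lemma count_true_of_isDyck {n : ℕ} {l : List Bool} (h : IsDyck l) (hl : l.length = 2 * n) :
    l.count true = n := by
  have h1 := count_tf l
  have h2 := h.1
  omega

lemma card_isDyck (n : ℕ) :
    Fintype.card {f : Fin (2 * n) → Bool // IsDyck (List.ofFn f)} = catalan n := by
  rw [← DyckWord.card_dyckWord_semilength_eq_catalan]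
  refine Fintype.card_congr (Equiv.ofBijective
    (fun f => ⟨dwOf (List.ofFn f.1) f.2, ?_⟩) ⟨?_, ?_⟩)
  · show (toSteps (List.ofFn f.1)).count U = n
    rw [count_U_toSteps]
    exact count_true_of_isDyck f.2 (by simp)
  · intro f g hfg
    have h1 : toSteps (List.ofFn f.1) = toSteps (List.ofFn g.1) :=
      congrArg (fun p => (Subtype.val p).toList) hfg
    have h2 := List.map_injective_iff.2 stepOf_inj h1
    exact Subtype.ext (List.ofFn_injective h2)
  · rintro ⟨p, hp⟩
    set l : List Bool := p.toList.map boolOf with hldef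
    have hl : l.length = 2 * n := by
      rw [hldef, List.length_map, ← p.two_mul_semilength_eq_length, hp]
    have hts : toSteps l = p.toList := by
      rw [hldef, toSteps, List.map_map]
      have : stepOf ∘ boolOf = id := funext stepOf_boolOf
      rw [this, List.map_id]
    have hdy : IsDyck l := by
      constructor
      · have h1 : (toSteps l).count U = (toSteps l).count D := by
          rw [hts]; exact p.count_U_eq_count_D
        rwa [count_U_toSteps, count_D_toSteps] at h1
      · intro q hq
        obtain hq' := (List.mem_inits _ _).1 hq
        rw [List.prefix_iff_eq_take.1 hq']
        have h1 : ((toSteps l).take q.length).count D ≤ ((toSteps l).take q.length).count U := by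
          rw [hts]; exact p.count_D_le_count_U q.length
        rwa [toSteps, ← List.map_take, ← toSteps, count_U_toSteps, count_D_toSteps] at h1
    refine ⟨⟨fun i => l[(i : ℕ)]'(by omega), ?_⟩, ?_⟩
    · have hofn : List.ofFn (fun i : Fin (2 * n) => l[(i : ℕ)]'(by omega)) = l := by
        apply List.ext_getElem
        · simp [hl]
        · intro i h1 h2
          simp
      rw [hofn]
      exact hdy
    · apply Subtype.ext
      apply DyckWord.ext
      show toSteps (List.ofFn fun i : Fin (2 * n) => l[(i : ℕ)]'(by omega)) = p.toList
      have hofn : List.ofFn (fun i : Fin (2 * n) => l[(i : ℕ)]'(by omega)) = l := by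
        apply List.ext_getElem
        · simp [hl]
        · intro i h1 h2
          simp
      rw [hofn, hts]

/-- If all values of `b` are odd and `2^(n+1) ∣ Δⁿ b x` for `n ≥ 1`, then
`C_n^b` is odd iff `n = 2^k - 1` for some `k`. -/
theorem wcat_odd_iff (b : ℕ → ℤ)
    (hodd : ∀ x, Odd (b x))
    (hdvd : ∀ n ≥ 1, ∀ x, (2 : ℤ) ^ (n + 1) ∣ Δ^[n] b x) (n : ℕ) :
    Odd (wcat b n) ↔ ∃ k : ℕ, n = 2 ^ k - 1 := by
  rw [odd_int_iff_cast]
  have hprod : ∀ l : List ℕ, (((l.map b).prod : ℤ) : ZMod 2) = 1 := by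
    intro l
    induction l with
    | nil => simp
    | cons h t ih =>
      have h1 : ((b h : ℤ) : ZMod 2) = 1 := (odd_int_iff_cast _).1 (hodd h)
      simp [h1, ih]
  have hcast : ((wcat b n : ℤ) : ZMod 2) = ((catalan n : ℕ) : ZMod 2) := by
    rw [wcat, Int.cast_sum]
    have : ∀ f : Fin (2 * n) → Bool,
        (((if IsDyck (List.ofFn f) then ((upHeights (List.ofFn f) 0).map b).prod else 0 : ℤ)) : ZMod 2)
          = if IsDyck (List.ofFn f) then (1 : ZMod 2) else 0 := by
      intro f
      by_cases h : IsDyck (List.ofFn f)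
      · simp [h, hprod]
      · simp [h]
    rw [Finset.sum_congr rfl (fun f _ => this f), Finset.sum_boole,
      ← Fintype.card_subtype, card_isDyck]
  rw [hcast, ← odd_nat_iff_cast]
  exact odd_catalan_iff n
end
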